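/- arXiv:math/0605713 — 9 statements merged into one kernel-verified Lean document; each statement's English description precedes it below -/
import Mathlib

section
/- If μ is a fuzzy right h-ideal and ν is a fuzzy left h-ideal of a hemiring S, then the h-product μ∘ₕν is contained in μ∩ν, i.e., (μ∘ₕν)(x) ≤ min{μ(x), ν(x)} for all x ∈ S. -/
open scoped BigOperators

variable {S : Type*}

def IsFuzzySet (μ : S → ℝ) : Prop := ∀ x, μ x ∈ Set.Icc (0:ℝ) 1

def IsFuzzyLeftHIdeal [NonUnitalSemiring S] (μ : S → ℝ) : Prop :=
  IsFuzzySet μ ∧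
  (∀ x y : S, min (μ x) (μ y) ≤ μ (x + y)) ∧
  (∀ x y : S, μ y ≤ μ (x * y)) ∧
  (∀ a b x z : S, x + a + z = b + z → min (μ a) (μ b) ≤ μ x)

def IsFuzzyRightHIdeal [NonUnitalSemiring S] (μ : S → ℝ) : Prop :=
  IsFuzzySet μ ∧
  (∀ x y : S, min (μ x) (μ y) ≤ μ (x + y)) ∧
  (∀ x y : S, μ x ≤ μ (x * y)) ∧
  (∀ a b x z : S, x + a + z = b + z → min (μ a) (μ b) ≤ μ x)

/-- The h-product of two fuzzy sets (equal to 0 when no representation exists). -/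
noncomputable def hProd [NonUnitalSemiring S] (μ ν : S → ℝ) (x : S) : ℝ :=
  sSup (insert 0 {r | ∃ a₁ b₁ a₂ b₂ z : S, x + a₁ * b₁ + z = a₂ * b₂ + z ∧
    r = min (min (μ a₁) (μ a₂)) (min (ν b₁) (ν b₂))})

def IsLeftHIdeal [NonUnitalSemiring S] (A : Set S) : Prop :=
  A.Nonempty ∧ (∀ a ∈ A, ∀ b ∈ A, a + b ∈ A) ∧ (∀ s : S, ∀ a ∈ A, s * a ∈ A) ∧
  (∀ x z a b : S, a ∈ A → b ∈ A → x + a + z = b + z → x ∈ A)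

def IsRightHIdeal [NonUnitalSemiring S] (A : Set S) : Prop :=
  A.Nonempty ∧ (∀ a ∈ A, ∀ b ∈ A, a + b ∈ A) ∧ (∀ s : S, ∀ a ∈ A, a * s ∈ A) ∧
  (∀ x z a b : S, a ∈ A → b ∈ A → x + a + z = b + z → x ∈ A)

/-- h-closure of a subset of a hemiring. -/
def hCl [NonUnitalSemiring S] (A : Set S) : Set S :=
  {x | ∃ a₁ ∈ A, ∃ a₂ ∈ A, ∃ z : S, x + a₁ + z = a₂ + z}

/-- AB : the set of finite (nonempty) sums of products ab, a ∈ A, b ∈ B. -/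
def setProd [NonUnitalSemiring S] (A B : Set S) : Set S :=
  {x | ∃ (n : ℕ) (a b : Fin (n + 1) → S), (∀ i, a i ∈ A) ∧ (∀ i, b i ∈ B) ∧
    x = ∑ i, a i * b i}

def IsPrimeLeftHIdeal [NonUnitalSemiring S] (P : Set S) : Prop :=
  IsLeftHIdeal P ∧ P ≠ Set.univ ∧
  ∀ A B : Set S, IsLeftHIdeal A → IsLeftHIdeal B → setProd A B ⊆ P → A ⊆ P ∨ B ⊆ P

def IsPrimeFuzzyLeftHIdeal [NonUnitalSemiring S] (ζ : S → ℝ) : Prop :=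
  IsFuzzyLeftHIdeal ζ ∧ (∃ x y : S, ζ x ≠ ζ y) ∧
  ∀ μ ν : S → ℝ, IsFuzzyLeftHIdeal μ → IsFuzzyLeftHIdeal ν →
    (∀ x, hProd μ ν x ≤ ζ x) → (∀ x, μ x ≤ ζ x) ∨ (∀ x, ν x ≤ ζ x)

def IsHHemiregular (S : Type*) [NonUnitalSemiring S] : Prop :=
  ∀ a : S, ∃ x₁ x₂ z : S, a + a * x₁ * a + z = a * x₂ * a + z

theorem hProd_le_inter [NonUnitalSemiring S] (μ ν : S → ℝ)
    (hμ : IsFuzzyRightHIdeal μ) (hν : IsFuzzyLeftHIdeal ν) (x : S) :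
    hProd μ ν x ≤ min (μ x) (ν x) := by
  obtain ⟨hμs, hμadd, hμmul, hμh⟩ := hμ
  obtain ⟨hνs, hνadd, hνmul, hνh⟩ := hν
  apply Real.sSup_le
  · rintro r (rfl | ⟨a₁, b₁, a₂, b₂, z, heq, rfl⟩)
    · exact le_min (hμs x).1 (hνs x).1
    · refine le_min ?_ ?_
      · calc min (min (μ a₁) (μ a₂)) (min (ν b₁) (ν b₂))
            ≤ min (μ a₁) (μ a₂) := min_le_left _ _
          _ ≤ min (μ (a₁ * b₁)) (μ (a₂ * b₂)) :=
              min_le_min (hμmul a₁ b₁) (hμmul a₂ b₂)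
          _ ≤ μ x := hμh _ _ _ _ heq
      · calc min (min (μ a₁) (μ a₂)) (min (ν b₁) (ν b₂))
            ≤ min (ν b₁) (ν b₂) := min_le_right _ _
          _ ≤ min (ν (a₁ * b₁)) (ν (a₂ * b₂)) :=
              min_le_min (hνmul a₁ b₁) (hνmul a₂ b₂)
          _ ≤ ν x := hνh _ _ _ _ heq
  · exact le_min (hμs x).1 (hνs x).1
end

section
/- If x belongs to the h-closure of A and y belongs to the h-closure of B, where A, B are subsets of a hemiring S, then xy belongs to the h-closure of AB. -/
open scoped BigOperators

variable {S : Type*}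

theorem mul_mem_hCl_setProd [NonUnitalSemiring S] (A B : Set S) (x y : S)
    (hx : x ∈ hCl A) (hy : y ∈ hCl B) : x * y ∈ hCl (setProd A B) := by
  obtain ⟨a₁, ha₁, a₂, ha₂, z, h1⟩ := hx
  obtain ⟨b₁, hb₁, b₂, hb₂, w, h2⟩ := hy
  have e1 : x * y + a₁ * y + z * y = a₂ * y + z * y := by
    rw [← add_mul, ← add_mul, ← add_mul, h1]
  have e2 : a₁ * y + a₁ * b₁ + a₁ * w = a₁ * b₂ + a₁ * w := by
    rw [← mul_add, ← mul_add, ← mul_add, h2]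
  have e3 : a₂ * y + a₂ * b₁ + a₂ * w = a₂ * b₂ + a₂ * w := by
    rw [← mul_add, ← mul_add, ← mul_add, h2]
  refine ⟨a₁ * b₂ + a₂ * b₁, ?_, a₂ * b₂ + a₁ * b₁, ?_,
    z * y + a₁ * w + a₂ * w + a₂ * y, ?_⟩
  · exact ⟨1, ![a₁, a₂], ![b₂, b₁], by simp [Fin.forall_fin_two, ha₁, ha₂],
      by simp [Fin.forall_fin_two, hb₁, hb₂], by simp [Fin.sum_univ_two]⟩
  · exact ⟨1, ![a₂, a₁], ![b₂, b₁], by simp [Fin.forall_fin_two, ha₁, ha₂],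
      by simp [Fin.forall_fin_two, hb₁, hb₂], by simp [Fin.sum_univ_two]⟩
  · calc x * y + (a₁ * b₂ + a₂ * b₁) + (z * y + a₁ * w + a₂ * w + a₂ * y)
        = (a₁ * b₂ + a₁ * w) + (x * y + a₂ * b₁ + z * y + a₂ * w + a₂ * y) := by
          abel
      _ = (a₁ * y + a₁ * b₁ + a₁ * w) + (x * y + a₂ * b₁ + z * y + a₂ * w + a₂ * y) := by
          rw [e2]
      _ = (x * y + a₁ * y + z * y) + (a₁ * b₁ + a₁ * w + a₂ * b₁ + a₂ * w + a₂ * y) := by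
          abel
      _ = (a₂ * y + z * y) + (a₁ * b₁ + a₁ * w + a₂ * b₁ + a₂ * w + a₂ * y) := by
          rw [e1]
      _ = (a₂ * y + a₂ * b₁ + a₂ * w) + (a₁ * b₁ + a₁ * w + z * y + a₂ * y) := by
          abel
      _ = (a₂ * b₂ + a₂ * w) + (a₁ * b₁ + a₁ * w + z * y + a₂ * y) := by rw [e3]
      _ = (a₂ * b₂ + a₁ * b₁) + (z * y + a₁ * w + a₂ * w + a₂ * y) := by abel
end

section
/- A hemiring S is h-hemiregular if and only if for every fuzzy right h-ideal μ and every fuzzy left h-ideal ν of S, the h-product μ∘ₕν equals μ∩ν. -/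
open scoped BigOperators

variable {S : Type*}

section Aux
variable {S : Type*} [NonUnitalSemiring S]

/-- Combination lemma for h-equalities. -/
lemma hhAux_comb {x p q z t₁ t₂ z₁ u₁ u₂ z₂ : S}
    (h : x + p + z = q + z) (hp : p + t₁ + z₁ = t₂ + z₁) (hq : q + u₁ + z₂ = u₂ + z₂) :
    x + (t₂ + u₁) + (z₁ + z₂ + z) = (u₂ + t₁) + (z₁ + z₂ + z) := by
  calc x + (t₂ + u₁) + (z₁ + z₂ + z)
      = (t₂ + z₁) + (x + u₁ + z₂ + z) := by abel
    _ = (p + t₁ + z₁) + (x + u₁ + z₂ + z) := by rw [hp]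
    _ = (x + p + z) + (t₁ + z₁ + u₁ + z₂) := by abel
    _ = (q + z) + (t₁ + z₁ + u₁ + z₂) := by rw [h]
    _ = (q + u₁ + z₂) + (t₁ + z₁ + z) := by abel
    _ = (u₂ + z₂) + (t₁ + z₁ + z) := by rw [hq]
    _ = (u₂ + t₁) + (z₁ + z₂ + z) := by abel

/-- Generators of the right h-ideal generated by `a`. -/
def hhTr (a : S) : Set S := {x | ∃ (n : ℕ) (s : S), x = n • a + a * s}

/-- Generators of the left h-ideal generated by `a`. -/
def hhTl (a : S) : Set S := {x | ∃ (n : ℕ) (s : S), x = n • a + s * a}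

/-- The right h-ideal generated by `a`. -/
def hhRr (a : S) : Set S := {x | ∃ t₁ ∈ hhTr a, ∃ t₂ ∈ hhTr a, ∃ z, x + t₁ + z = t₂ + z}

/-- The left h-ideal generated by `a`. -/
def hhLl (a : S) : Set S := {x | ∃ t₁ ∈ hhTl a, ∃ t₂ ∈ hhTl a, ∃ z, x + t₁ + z = t₂ + z}

lemma hhTr_zero (a : S) : (0 : S) ∈ hhTr a := ⟨0, 0, by simp⟩
lemma hhTl_zero (a : S) : (0 : S) ∈ hhTl a := ⟨0, 0, by simp⟩
lemma hhTr_self (a : S) : a ∈ hhTr a := ⟨1, 0, by simp⟩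
lemma hhTl_self (a : S) : a ∈ hhTl a := ⟨1, 0, by simp⟩

lemma hhTr_add {a x y : S} (hx : x ∈ hhTr a) (hy : y ∈ hhTr a) : x + y ∈ hhTr a := by
  obtain ⟨n, s, rfl⟩ := hx; obtain ⟨m, t, rfl⟩ := hy
  exact ⟨n + m, s + t, by simp [add_nsmul, mul_add]; abel⟩

lemma hhTl_add {a x y : S} (hx : x ∈ hhTl a) (hy : y ∈ hhTl a) : x + y ∈ hhTl a := by
  obtain ⟨n, s, rfl⟩ := hx; obtain ⟨m, t, rfl⟩ := hy
  exact ⟨n + m, s + t, by simp [add_nsmul, add_mul]; abel⟩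

lemma hhTr_mul {a x : S} (hx : x ∈ hhTr a) (y : S) : x * y ∈ hhTr a := by
  obtain ⟨n, s, rfl⟩ := hx
  exact ⟨0, n • y + s * y, by
    simp [add_mul, mul_add, smul_mul_assoc, mul_smul_comm, mul_assoc]⟩

lemma hhTl_mul {a x : S} (hx : x ∈ hhTl a) (y : S) : y * x ∈ hhTl a := by
  obtain ⟨n, s, rfl⟩ := hx
  exact ⟨0, n • y + y * s, by
    simp [add_mul, mul_add, smul_mul_assoc, mul_smul_comm, mul_assoc]⟩

lemma hhRr_of_gen {a x : S} (hx : x ∈ hhTr a) : x ∈ hhRr a :=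
  ⟨0, hhTr_zero a, x, hx, 0, by simp⟩

lemma hhLl_of_gen {a x : S} (hx : x ∈ hhTl a) : x ∈ hhLl a :=
  ⟨0, hhTl_zero a, x, hx, 0, by simp⟩

lemma hhRr_self (a : S) : a ∈ hhRr a := hhRr_of_gen (hhTr_self a)
lemma hhLl_self (a : S) : a ∈ hhLl a := hhLl_of_gen (hhTl_self a)

lemma hhRr_add {a x y : S} (hx : x ∈ hhRr a) (hy : y ∈ hhRr a) : x + y ∈ hhRr a := by
  obtain ⟨t₁, ht₁, t₂, ht₂, z, h⟩ := hx
  obtain ⟨u₁, hu₁, u₂, hu₂, w, h'⟩ := hy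
  refine ⟨t₁ + u₁, hhTr_add ht₁ hu₁, t₂ + u₂, hhTr_add ht₂ hu₂, z + w, ?_⟩
  calc x + y + (t₁ + u₁) + (z + w) = (x + t₁ + z) + (y + u₁ + w) := by abel
    _ = (t₂ + z) + (u₂ + w) := by rw [h, h']
    _ = t₂ + u₂ + (z + w) := by abel

lemma hhLl_add {a x y : S} (hx : x ∈ hhLl a) (hy : y ∈ hhLl a) : x + y ∈ hhLl a := by
  obtain ⟨t₁, ht₁, t₂, ht₂, z, h⟩ := hx
  obtain ⟨u₁, hu₁, u₂, hu₂, w, h'⟩ := hy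
  refine ⟨t₁ + u₁, hhTl_add ht₁ hu₁, t₂ + u₂, hhTl_add ht₂ hu₂, z + w, ?_⟩
  calc x + y + (t₁ + u₁) + (z + w) = (x + t₁ + z) + (y + u₁ + w) := by abel
    _ = (t₂ + z) + (u₂ + w) := by rw [h, h']
    _ = t₂ + u₂ + (z + w) := by abel

lemma hhRr_mul {a x : S} (hx : x ∈ hhRr a) (y : S) : x * y ∈ hhRr a := by
  obtain ⟨t₁, ht₁, t₂, ht₂, z, h⟩ := hx
  refine ⟨t₁ * y, hhTr_mul ht₁ y, t₂ * y, hhTr_mul ht₂ y, z * y, ?_⟩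
  have h0 := congrArg (fun c => c * y) h
  simpa [add_mul] using h0

lemma hhLl_mul {a x : S} (hx : x ∈ hhLl a) (y : S) : y * x ∈ hhLl a := by
  obtain ⟨t₁, ht₁, t₂, ht₂, z, h⟩ := hx
  refine ⟨y * t₁, hhTl_mul ht₁ y, y * t₂, hhTl_mul ht₂ y, y * z, ?_⟩
  have h0 := congrArg (fun c => y * c) h
  simpa [mul_add] using h0

lemma hhRr_h {a x p q z : S} (hp : p ∈ hhRr a) (hq : q ∈ hhRr a)
    (h : x + p + z = q + z) : x ∈ hhRr a := by
  obtain ⟨t₁, ht₁, t₂, ht₂, z₁, hp'⟩ := hp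
  obtain ⟨u₁, hu₁, u₂, hu₂, z₂, hq'⟩ := hq
  exact ⟨t₂ + u₁, hhTr_add ht₂ hu₁, u₂ + t₁, hhTr_add hu₂ ht₁, z₁ + z₂ + z,
    hhAux_comb h hp' hq'⟩

lemma hhLl_h {a x p q z : S} (hp : p ∈ hhLl a) (hq : q ∈ hhLl a)
    (h : x + p + z = q + z) : x ∈ hhLl a := by
  obtain ⟨t₁, ht₁, t₂, ht₂, z₁, hp'⟩ := hp
  obtain ⟨u₁, hu₁, u₂, hu₂, z₂, hq'⟩ := hq
  exact ⟨t₂ + u₁, hhTl_add ht₂ hu₁, u₂ + t₁, hhTl_add hu₂ ht₁, z₁ + z₂ + z,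
    hhAux_comb h hp' hq'⟩

open Classical in
/-- Characteristic function of a set. -/
noncomputable def hhChi (A : Set S) : S → ℝ := fun x => if x ∈ A then 1 else 0

lemma hhChi_nonneg (A : Set S) (x : S) : 0 ≤ hhChi A x := by
  unfold hhChi; split <;> norm_num

lemma hhChi_le_one (A : Set S) (x : S) : hhChi A x ≤ 1 := by
  unfold hhChi; split <;> norm_num

lemma hhChi_eq_one {A : Set S} {t : S} (h : t ∈ A) : hhChi A t = 1 := by
  unfold hhChi; rw [if_pos h]

lemma hhChi_eq_zero {A : Set S} {t : S} (h : t ∉ A) : hhChi A t = 0 := by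
  unfold hhChi; rw [if_neg h]

lemma hhChi_right (a : S) : IsFuzzyRightHIdeal (hhChi (hhRr a)) := by
  refine ⟨fun x => ⟨hhChi_nonneg _ x, hhChi_le_one _ x⟩, ?_, ?_, ?_⟩
  · intro x y
    by_cases hx : x ∈ hhRr a
    · by_cases hy : y ∈ hhRr a
      · rw [hhChi_eq_one hx, hhChi_eq_one hy, hhChi_eq_one (hhRr_add hx hy)]
        norm_num
      · rw [hhChi_eq_zero hy]
        exact le_trans (min_le_right _ _) (hhChi_nonneg _ _)
    · rw [hhChi_eq_zero hx]
      exact le_trans (min_le_left _ _) (hhChi_nonneg _ _)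
  · intro x y
    by_cases hx : x ∈ hhRr a
    · rw [hhChi_eq_one hx, hhChi_eq_one (hhRr_mul hx y)]
    · rw [hhChi_eq_zero hx]; exact hhChi_nonneg _ _
  · intro p q x z h
    by_cases hp : p ∈ hhRr a
    · by_cases hq : q ∈ hhRr a
      · rw [hhChi_eq_one hp, hhChi_eq_one hq, hhChi_eq_one (hhRr_h hp hq h)]
        norm_num
      · rw [hhChi_eq_zero hq]
        exact le_trans (min_le_right _ _) (hhChi_nonneg _ _)
    · rw [hhChi_eq_zero hp]
      exact le_trans (min_le_left _ _) (hhChi_nonneg _ _)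

lemma hhChi_left (a : S) : IsFuzzyLeftHIdeal (hhChi (hhLl a)) := by
  refine ⟨fun x => ⟨hhChi_nonneg _ x, hhChi_le_one _ x⟩, ?_, ?_, ?_⟩
  · intro x y
    by_cases hx : x ∈ hhLl a
    · by_cases hy : y ∈ hhLl a
      · rw [hhChi_eq_one hx, hhChi_eq_one hy, hhChi_eq_one (hhLl_add hx hy)]
        norm_num
      · rw [hhChi_eq_zero hy]
        exact le_trans (min_le_right _ _) (hhChi_nonneg _ _)
    · rw [hhChi_eq_zero hx]
      exact le_trans (min_le_left _ _) (hhChi_nonneg _ _)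
  · intro x y
    by_cases hy : y ∈ hhLl a
    · rw [hhChi_eq_one hy, hhChi_eq_one (hhLl_mul hy x)]
    · rw [hhChi_eq_zero hy]; exact hhChi_nonneg _ _
  · intro p q x z h
    by_cases hp : p ∈ hhLl a
    · by_cases hq : q ∈ hhLl a
      · rw [hhChi_eq_one hp, hhChi_eq_one hq, hhChi_eq_one (hhLl_h hp hq h)]
        norm_num
      · rw [hhChi_eq_zero hq]
        exact le_trans (min_le_right _ _) (hhChi_nonneg _ _)
    · rw [hhChi_eq_zero hp]
      exact le_trans (min_le_left _ _) (hhChi_nonneg _ _)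

/-- product of generators has the canonical form. -/
lemma hhTr_mul_Tl {a t t' : S} (ht : t ∈ hhTr a) (ht' : t' ∈ hhTl a) :
    ∃ (k : ℕ) (w : S), t * t' = k • (a * a) + a * w * a := by
  obtain ⟨n, s, rfl⟩ := ht; obtain ⟨m, s', rfl⟩ := ht'
  refine ⟨n * m, n • s' + m • s + s * s', ?_⟩
  simp [add_mul, mul_add, smul_mul_assoc, mul_smul_comm, mul_assoc, mul_nsmul, add_smul, smul_add]
  abel

lemma hhCsum (a : S) (k k' : ℕ) (w w' : S) :
    (k • (a * a) + a * w * a) + (k' • (a * a) + a * w' * a)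
      = (k + k') • (a * a) + a * (w + w') * a := by
  simp [add_nsmul, mul_add, add_mul]; abel

/-- A product of an element of the generated right h-ideal and one of the
generated left h-ideal is h-equivalent to a canonical form. -/
lemma hhProd_form {a u v : S} (hu : u ∈ hhRr a) (hv : v ∈ hhLl a) :
    ∃ (k₁ k₂ : ℕ) (w₁ w₂ z : S),
      u * v + (k₁ • (a * a) + a * w₁ * a) + z = (k₂ • (a * a) + a * w₂ * a) + z := by
  obtain ⟨t₁, ht₁, t₂, ht₂, z₁, hu'⟩ := hu
  obtain ⟨s₁, hs₁, s₂, hs₂, z₂, hv'⟩ := hv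
  have hA : u * v + t₁ * v + z₁ * v = t₂ * v + z₁ * v := by
    have := congrArg (fun c => c * v) hu'; simpa [add_mul] using this
  have hB : t₁ * v + t₁ * s₁ + t₁ * z₂ = t₁ * s₂ + t₁ * z₂ := by
    have := congrArg (fun c => t₁ * c) hv'; simpa [mul_add] using this
  have hC : t₂ * v + t₂ * s₁ + t₂ * z₂ = t₂ * s₂ + t₂ * z₂ := by
    have := congrArg (fun c => t₂ * c) hv'; simpa [mul_add] using this
  have key := hhAux_comb hA hB hC
  obtain ⟨k₁₂, w₁₂, e₁₂⟩ := hhTr_mul_Tl ht₁ hs₂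
  obtain ⟨k₂₁, w₂₁, e₂₁⟩ := hhTr_mul_Tl ht₂ hs₁
  obtain ⟨k₂₂, w₂₂, e₂₂⟩ := hhTr_mul_Tl ht₂ hs₂
  obtain ⟨k₁₁, w₁₁, e₁₁⟩ := hhTr_mul_Tl ht₁ hs₁
  rw [e₁₂, e₂₁, e₂₂, e₁₁, hhCsum, hhCsum] at key
  exact ⟨_, _, _, _, _, key⟩

/-- Elimination of the `a*a` terms. -/
lemma hhElim {a Z : S} {k₁ k₂ : ℕ} {w₁ w₂ : S}
    (E : a + (k₁ • (a * a) + a * w₁ * a) + Z = (k₂ • (a * a) + a * w₂ * a) + Z) :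
    ∃ x₁ x₂ z : S, a + a * x₁ * a + z = a * x₂ * a + z := by
  have E1 : a * a + a * (k₁ • a + a * w₁) * a + a * Z
      = a * (k₂ • a + a * w₂) * a + a * Z := by
    have h0 := congrArg (fun c => a * c) E
    calc a * a + a * (k₁ • a + a * w₁) * a + a * Z
        = a * (a + (k₁ • (a * a) + a * w₁ * a) + Z) := by
          simp only [mul_add, add_mul, mul_smul_comm, smul_mul_assoc, mul_assoc] <;> abel
      _ = a * ((k₂ • (a * a) + a * w₂ * a) + Z) := h0
      _ = a * (k₂ • a + a * w₂) * a + a * Z := by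
          simp only [mul_add, add_mul, mul_smul_comm, smul_mul_assoc, mul_assoc] <;> abel
  have l2 : ∀ k : ℕ, k • (a * a) + k • (a * (k₁ • a + a * w₁) * a) + k • (a * Z)
      = k • (a * (k₂ • a + a * w₂) * a) + k • (a * Z) := by
    intro k
    have h0 := congrArg (fun c => k • c) E1
    simpa [smul_add] using h0
  have hp : (k₁ • (a * a) + a * w₁ * a) + k₁ • (a * (k₁ • a + a * w₁) * a) + k₁ • (a * Z)
      = (k₁ • (a * (k₂ • a + a * w₂) * a) + a * w₁ * a) + k₁ • (a * Z) := by
    calc (k₁ • (a * a) + a * w₁ * a) + k₁ • (a * (k₁ • a + a * w₁) * a) + k₁ • (a * Z)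
        = (k₁ • (a * a) + k₁ • (a * (k₁ • a + a * w₁) * a) + k₁ • (a * Z)) + a * w₁ * a := by
          abel
      _ = (k₁ • (a * (k₂ • a + a * w₂) * a) + k₁ • (a * Z)) + a * w₁ * a := by rw [l2 k₁]
      _ = (k₁ • (a * (k₂ • a + a * w₂) * a) + a * w₁ * a) + k₁ • (a * Z) := by abel
  have hq : (k₂ • (a * a) + a * w₂ * a) + k₂ • (a * (k₁ • a + a * w₁) * a) + k₂ • (a * Z)
      = (k₂ • (a * (k₂ • a + a * w₂) * a) + a * w₂ * a) + k₂ • (a * Z) := by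
    calc (k₂ • (a * a) + a * w₂ * a) + k₂ • (a * (k₁ • a + a * w₁) * a) + k₂ • (a * Z)
        = (k₂ • (a * a) + k₂ • (a * (k₁ • a + a * w₁) * a) + k₂ • (a * Z)) + a * w₂ * a := by
          abel
      _ = (k₂ • (a * (k₂ • a + a * w₂) * a) + k₂ • (a * Z)) + a * w₂ * a := by rw [l2 k₂]
      _ = (k₂ • (a * (k₂ • a + a * w₂) * a) + a * w₂ * a) + k₂ • (a * Z) := by abel
  have key := hhAux_comb E hp hq
  refine ⟨k₁ • (k₂ • a + a * w₂) + w₁ + k₂ • (k₁ • a + a * w₁),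
    k₂ • (k₂ • a + a * w₂) + w₂ + k₁ • (k₁ • a + a * w₁),
    k₁ • (a * Z) + k₂ • (a * Z) + Z, ?_⟩
  have r1 : a * (k₁ • (k₂ • a + a * w₂) + w₁ + k₂ • (k₁ • a + a * w₁)) * a
      = (k₁ • (a * (k₂ • a + a * w₂) * a) + a * w₁ * a) + k₂ • (a * (k₁ • a + a * w₁) * a) := by
    simp only [mul_add, add_mul, mul_smul_comm, smul_mul_assoc] <;> abel
  have r2 : a * (k₂ • (k₂ • a + a * w₂) + w₂ + k₁ • (k₁ • a + a * w₁)) * a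
      = (k₂ • (a * (k₂ • a + a * w₂) * a) + a * w₂ * a) + k₁ • (a * (k₁ • a + a * w₁) * a) := by
    simp only [mul_add, add_mul, mul_smul_comm, smul_mul_assoc] <;> abel
  rw [r1, r2]
  exact key
end Aux

section MainAux
variable {S : Type*} [NonUnitalSemiring S]

lemma hhChi_pos {A : Set S} {t : S} (h : (1:ℝ)/2 < hhChi A t) : t ∈ A := by
  by_contra hc
  unfold hhChi at h
  rw [if_neg hc] at h
  norm_num at h
end MainAux

theorem hHemiregular_iff_hProd_eq_inter [NonUnitalSemiring S] :
    IsHHemiregular S ↔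
      ∀ μ ν : S → ℝ, IsFuzzyRightHIdeal μ → IsFuzzyLeftHIdeal ν →
        ∀ x : S, hProd μ ν x = min (μ x) (ν x) := by
  constructor
  · intro hreg μ ν hμ hν x
    obtain ⟨hμset, hμadd, hμmul, hμh⟩ := hμ
    obtain ⟨hνset, hνadd, hνmul, hνh⟩ := hν
    have hbdd : BddAbove (insert 0 {r | ∃ a₁ b₁ a₂ b₂ z : S,
        x + a₁ * b₁ + z = a₂ * b₂ + z ∧
        r = min (min (μ a₁) (μ a₂)) (min (ν b₁) (ν b₂))}) := by
      refine ⟨1, ?_⟩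
      rintro r (rfl | ⟨a₁, b₁, a₂, b₂, z, -, rfl⟩)
      · norm_num
      · exact le_trans (min_le_left _ _) (le_trans (min_le_left _ _) (hμset a₁).2)
    apply le_antisymm
    · apply csSup_le ⟨0, Set.mem_insert _ _⟩
      rintro r (rfl | ⟨a₁, b₁, a₂, b₂, z, hrep, rfl⟩)
      · exact le_min (hμset x).1 (hνset x).1
      · refine le_min ?_ ?_
        · calc min (min (μ a₁) (μ a₂)) (min (ν b₁) (ν b₂))
              ≤ min (μ a₁) (μ a₂) := min_le_left _ _
            _ ≤ min (μ (a₁ * b₁)) (μ (a₂ * b₂)) := min_le_min (hμmul a₁ b₁) (hμmul a₂ b₂)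
            _ ≤ μ x := hμh _ _ _ _ hrep
        · calc min (min (μ a₁) (μ a₂)) (min (ν b₁) (ν b₂))
              ≤ min (ν b₁) (ν b₂) := min_le_right _ _
            _ ≤ min (ν (a₁ * b₁)) (ν (a₂ * b₂)) := min_le_min (hνmul a₁ b₁) (hνmul a₂ b₂)
            _ ≤ ν x := hνh _ _ _ _ hrep
    · obtain ⟨x₁, x₂, z, hx⟩ := hreg x
      have hmem : min (min (μ x) (μ x)) (min (ν (x₁ * x)) (ν (x₂ * x)))
          ∈ insert (0:ℝ) {r | ∃ a₁ b₁ a₂ b₂ z : S, x + a₁ * b₁ + z = a₂ * b₂ + z ∧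
            r = min (min (μ a₁) (μ a₂)) (min (ν b₁) (ν b₂))} :=
        Set.mem_insert_of_mem _ ⟨x, x₁ * x, x, x₂ * x, z,
          by rw [← mul_assoc, ← mul_assoc]; exact hx, rfl⟩
      refine le_trans (le_min (le_min (min_le_left _ _) (min_le_left _ _))
        (le_min ((min_le_right _ _).trans (hνmul x₁ x))
          ((min_le_right _ _).trans (hνmul x₂ x)))) (le_csSup hbdd hmem)
  · intro H a
    have h1 := H (hhChi (hhRr a)) (hhChi (hhLl a)) (hhChi_right a) (hhChi_left a) a
    have ha1 : hhChi (hhRr a) a = 1 := hhChi_eq_one (hhRr_self a)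
    have ha2 : hhChi (hhLl a) a = 1 := hhChi_eq_one (hhLl_self a)
    rw [ha1, ha2, min_self] at h1
    have hsup : sSup (insert (0:ℝ) {r | ∃ a₁ b₁ a₂ b₂ z : S,
        a + a₁ * b₁ + z = a₂ * b₂ + z ∧
        r = min (min (hhChi (hhRr a) a₁) (hhChi (hhRr a) a₂))
          (min (hhChi (hhLl a) b₁) (hhChi (hhLl a) b₂))}) = 1 := h1
    have hex : ∃ r ∈ (insert (0:ℝ) {r | ∃ a₁ b₁ a₂ b₂ z : S,
        a + a₁ * b₁ + z = a₂ * b₂ + z ∧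
        r = min (min (hhChi (hhRr a) a₁) (hhChi (hhRr a) a₂))
          (min (hhChi (hhLl a) b₁) (hhChi (hhLl a) b₂))}), (1:ℝ)/2 < r := by
      by_contra hc
      push_neg at hc
      have h2 := csSup_le ⟨0, Set.mem_insert _ _⟩ hc
      rw [hsup] at h2
      linarith
    obtain ⟨r, hr, hhalf⟩ := hex
    rcases hr with rfl | ⟨a₁, b₁, a₂, b₂, z, hrep, rfl⟩
    · linarith
    rw [lt_min_iff, lt_min_iff, lt_min_iff] at hhalf
    obtain ⟨⟨h11, h12⟩, h21, h22⟩ := hhalf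
    obtain ⟨k₁, k₂, w₁, w₂, z₁, hp⟩ := hhProd_form (hhChi_pos h11) (hhChi_pos h21)
    obtain ⟨k₁', k₂', w₁', w₂', z₂, hq⟩ := hhProd_form (hhChi_pos h12) (hhChi_pos h22)
    have key := hhAux_comb hrep hp hq
    rw [hhCsum, hhCsum] at key
    exact hhElim key
end

section
/- The characteristic function χ_P of a subset P of a hemiring S is a prime fuzzy left h-ideal of S if and only if P is a prime left h-ideal of S. -/
open scoped BigOperators

variable {S : Type*}

open scoped Classical in
lemma charFuzzy [NonUnitalSemiring S] {A : Set S} (hA : IsLeftHIdeal A) :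
    IsFuzzyLeftHIdeal (fun x => if x ∈ A then (1:ℝ) else 0) := by
  obtain ⟨-, hadd, hmul, hh⟩ := hA
  refine ⟨fun x => ?_, fun x y => ?_, fun x y => ?_, fun a b x z hxz => ?_⟩
  · dsimp only; split <;> constructor <;> norm_num
  · dsimp only; split_ifs with h1 h2 h3 <;> try norm_num
    exact absurd (hadd _ h1 _ h2) h3
  · dsimp only; split_ifs with h1 h2 <;> try norm_num
    exact absurd (hmul x _ h1) h2
  · dsimp only; split_ifs with h1 h2 h3 <;> try norm_num
    exact absurd (hh x z a b h1 h2 hxz) h3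

lemma levelIdeal [NonUnitalSemiring S] {μ : S → ℝ} (hμ : IsFuzzyLeftHIdeal μ)
    {t : ℝ} {x₀ : S} (hx₀ : t ≤ μ x₀) : IsLeftHIdeal {x | t ≤ μ x} := by
  obtain ⟨-, hadd, hmul, hh⟩ := hμ
  exact ⟨⟨x₀, hx₀⟩, fun a ha b hb => le_trans (le_min ha hb) (hadd a b),
    fun s a ha => le_trans ha (hmul s a),
    fun x z a b ha hb hxz => le_trans (le_min ha hb) (hh a b x z hxz)⟩

lemma hProd_bdd [NonUnitalSemiring S] {μ ν : S → ℝ} (hμ : IsFuzzySet μ) (x : S) :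
    BddAbove (insert (0:ℝ) {r | ∃ a₁ b₁ a₂ b₂ z : S, x + a₁ * b₁ + z = a₂ * b₂ + z ∧
      r = min (min (μ a₁) (μ a₂)) (min (ν b₁) (ν b₂))}) := by
  refine ⟨1, ?_⟩
  rintro r (rfl | ⟨a₁, b₁, a₂, b₂, z, -, rfl⟩)
  · norm_num
  · exact le_trans (min_le_left _ _) (le_trans (min_le_left _ _) (hμ a₁).2)

lemma sum_mem_of [NonUnitalSemiring S] {P : Set S}
    (hadd : ∀ a ∈ P, ∀ b ∈ P, a + b ∈ P) :
    ∀ n (f : Fin (n+1) → S), (∀ i, f i ∈ P) → (∑ i, f i) ∈ P := by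
  intro n
  induction n with
  | zero => intro f hf; simpa using hf 0
  | succ n ih =>
    intro f hf
    rw [Fin.sum_univ_castSucc]
    exact hadd _ (ih _ fun i => hf _) _ (hf _)

open scoped Classical in
theorem char_prime_fuzzy_iff_prime [NonUnitalSemiring S] (P : Set S) :
    IsPrimeFuzzyLeftHIdeal (fun x => if x ∈ P then (1:ℝ) else 0) ↔
      IsPrimeLeftHIdeal P := by
  constructor
  · rintro ⟨hf, ⟨x, y, hxy⟩, hprime⟩
    have mem_of : ∀ {z : S}, (0:ℝ) < (if z ∈ P then (1:ℝ) else 0) → z ∈ P := by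
      intro z hz
      by_contra h
      simp [h] at hz
    have hPI : IsLeftHIdeal P := by
      obtain ⟨-, hadd, hmul, hh⟩ := hf
      refine ⟨?_, fun a ha b hb => ?_, fun s a ha => ?_, fun u z a b ha hb huz => ?_⟩
      · rcases Set.eq_empty_or_nonempty P with he | hne
        · exfalso; apply hxy; simp [he]
        · exact hne
      · exact mem_of (lt_of_lt_of_le (by simp [ha, hb]) (hadd a b))
      · exact mem_of (lt_of_lt_of_le (by simp [ha]) (hmul s a))
      · exact mem_of (lt_of_lt_of_le (by simp [ha, hb]) (hh a b u z huz))
    refine ⟨hPI, ?_, ?_⟩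
    · intro he
      apply hxy; simp [he]
    · intro A B hA hB hAB
      have hμ := charFuzzy hA
      have hν := charFuzzy hB
      have hle : ∀ u : S, hProd (fun v => if v ∈ A then (1:ℝ) else 0)
          (fun v => if v ∈ B then (1:ℝ) else 0) u ≤ (if u ∈ P then (1:ℝ) else 0) := by
        intro u
        apply csSup_le ⟨0, Set.mem_insert _ _⟩
        rintro r (rfl | ⟨a₁, b₁, a₂, b₂, z, huz, rfl⟩)
        · split <;> norm_num
        · by_cases h1 : a₁ ∈ A
          · by_cases h2 : a₂ ∈ A
            · by_cases h3 : b₁ ∈ B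
              · by_cases h4 : b₂ ∈ B
                · have hm1 : a₁ * b₁ ∈ P := hAB ⟨0, fun _ => a₁, fun _ => b₁,
                    fun _ => h1, fun _ => h3, by simp⟩
                  have hm2 : a₂ * b₂ ∈ P := hAB ⟨0, fun _ => a₂, fun _ => b₂,
                    fun _ => h2, fun _ => h4, by simp⟩
                  have : u ∈ P := hPI.2.2.2 u z _ _ hm1 hm2 huz
                  simp [this, h1, h2, h3, h4]
                · exact le_trans (le_trans (min_le_right _ _) (min_le_right _ _)) (by simp [h4]; split <;> norm_num)
              · exact le_trans (le_trans (min_le_right _ _) (min_le_left _ _)) (by simp [h3]; split <;> norm_num)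
            · exact le_trans (le_trans (min_le_left _ _) (min_le_right _ _)) (by simp [h2]; split <;> norm_num)
          · exact le_trans (le_trans (min_le_left _ _) (min_le_left _ _)) (by simp [h1]; split <;> norm_num)
      rcases hprime _ _ hμ hν hle with h | h
      · left
        intro a ha
        exact mem_of (lt_of_lt_of_le (by simp [ha]) (h a))
      · right
        intro b hb
        exact mem_of (lt_of_lt_of_le (by simp [hb]) (h b))
  · rintro ⟨hPI, hne, hprime⟩
    obtain ⟨p, hp⟩ := hPI.1
    obtain ⟨q, hq⟩ := Set.ne_univ_iff_exists_notMem P |>.mp hne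
    refine ⟨charFuzzy hPI, ⟨p, q, by simp [hp, hq]⟩, ?_⟩
    intro μ ν hμ hν hle
    by_contra h
    push_neg at h
    obtain ⟨⟨x₀, hx₀⟩, ⟨y₀, hy₀⟩⟩ := h
    have hx₀P : x₀ ∉ P := by
      intro hmem
      simp [hmem] at hx₀
      exact absurd (hμ.1 x₀).2 (not_le.mpr hx₀)
    have hy₀P : y₀ ∉ P := by
      intro hmem
      simp [hmem] at hy₀
      exact absurd (hν.1 y₀).2 (not_le.mpr hy₀)
    simp [hx₀P] at hx₀
    simp [hy₀P] at hy₀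
    set A : Set S := {v | μ x₀ ≤ μ v} with hAdef
    set B : Set S := {v | ν y₀ ≤ ν v} with hBdef
    have hA : IsLeftHIdeal A := levelIdeal hμ le_rfl
    have hB : IsLeftHIdeal B := levelIdeal hν le_rfl
    have hsub : setProd A B ⊆ P := by
      rintro s ⟨n, a, b, ha, hb, rfl⟩
      refine sum_mem_of hPI.2.1 n _ (fun i => ?_)
      set c := a i
      set d := b i
      have hrep : c * d + c * d + c * d = (c + c) * d + (c * d) := by
        rw [add_mul]
      have hr : min (min (μ c) (μ (c + c))) (min (ν d) (ν d)) ≤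
          hProd μ ν (c * d) :=
        le_csSup (hProd_bdd hμ.1 _) (Set.mem_insert_of_mem _
          ⟨c, d, c + c, d, c * d, hrep, rfl⟩)
      have hcc : μ x₀ ≤ μ (c + c) :=
        le_trans (ha i) (le_trans (le_min le_rfl le_rfl) (hμ.2.1 c c))
      have hpos : 0 < hProd μ ν (c * d) := by
        refine lt_of_lt_of_le ?_ hr
        refine lt_min (lt_min ?_ ?_) (lt_min ?_ ?_)
        · exact lt_of_lt_of_le hx₀ (ha i)
        · exact lt_of_lt_of_le hx₀ hcc
        · exact lt_of_lt_of_le hy₀ (hb i)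
        · exact lt_of_lt_of_le hy₀ (hb i)
      have := lt_of_lt_of_le hpos (hle (c * d))
      by_contra hcd
      simp [hcd] at this
    rcases hprime A B hA hB hsub with h | h
    · exact hx₀P (h (Set.mem_setOf.mpr le_rfl))
    · exact hy₀P (h (Set.mem_setOf.mpr le_rfl))
end

section
/- If ζ is a prime fuzzy left h-ideal of a hemiring S, then the image of ζ contains exactly two elements, ζ(0) = 1, and the set ζ⁰ = {x ∈ S | ζ(x) = ζ(0)} is a prime left h-ideal of S. -/
open scoped BigOperators

variable {S : Type*}

noncomputable def myInd [NonUnitalSemiring S] (U : Set S) : S → ℝ := U.indicator fun _ => 1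

lemma myInd_mem [NonUnitalSemiring S] {U : Set S} {x : S} (h : x ∈ U) : myInd U x = 1 :=
  Set.indicator_of_mem h _

lemma myInd_notMem [NonUnitalSemiring S] {U : Set S} {x : S} (h : x ∉ U) : myInd U x = 0 :=
  Set.indicator_of_notMem h _

lemma myInd_nonneg [NonUnitalSemiring S] (U : Set S) (x : S) : 0 ≤ myInd U x := by
  by_cases h : x ∈ U
  · rw [myInd_mem h]; norm_num
  · rw [myInd_notMem h]

lemma myInd_le_one [NonUnitalSemiring S] (U : Set S) (x : S) : myInd U x ≤ 1 := by
  by_cases h : x ∈ U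
  · rw [myInd_mem h]
  · rw [myInd_notMem h]; norm_num

section MyAux

variable [NonUnitalSemiring S]

lemma myAux_le_zero (ζ : S → ℝ) (h : IsFuzzyLeftHIdeal ζ) (x : S) : ζ x ≤ ζ 0 := by
  have := h.2.2.1 0 x
  rwa [zero_mul] at this

lemma myAux_const_fuzzy (c : ℝ) (hc : c ∈ Set.Icc (0:ℝ) 1) :
    IsFuzzyLeftHIdeal (fun _ : S => c) := by
  refine ⟨fun _ => hc, fun _ _ => ?_, fun _ _ => le_refl c, fun _ _ _ _ _ => ?_⟩ <;> simp

lemma myAux_indicator_fuzzy (U : Set S)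
    (hadd : ∀ a ∈ U, ∀ b ∈ U, a + b ∈ U)
    (hmul : ∀ s : S, ∀ a ∈ U, s * a ∈ U)
    (hh : ∀ x z a b : S, a ∈ U → b ∈ U → x + a + z = b + z → x ∈ U) :
    IsFuzzyLeftHIdeal (myInd U) := by
  refine ⟨fun x => ⟨myInd_nonneg U x, myInd_le_one U x⟩, fun x y => ?_, fun x y => ?_,
    fun a b x z hz => ?_⟩
  · by_cases hx : x ∈ U
    · by_cases hy : y ∈ U
      · rw [myInd_mem hx, myInd_mem hy, myInd_mem (hadd x hx y hy), min_self]
      · rw [myInd_notMem hy, min_comm]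
        exact le_trans (min_le_left _ _) (myInd_nonneg U _)
    · rw [myInd_notMem hx]
      exact le_trans (min_le_left _ _) (myInd_nonneg U _)
  · by_cases hy : y ∈ U
    · rw [myInd_mem hy, myInd_mem (hmul x y hy)]
    · rw [myInd_notMem hy]; exact myInd_nonneg U _
  · by_cases ha : a ∈ U
    · by_cases hb : b ∈ U
      · rw [myInd_mem ha, myInd_mem hb, myInd_mem (hh x z a b ha hb hz), min_self]
      · rw [myInd_notMem hb, min_comm]
        exact le_trans (min_le_left _ _) (myInd_nonneg U _)
    · rw [myInd_notMem ha]
      exact le_trans (min_le_left _ _) (myInd_nonneg U _)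

lemma myAux_hProd_le (μ ν ζ : S → ℝ) (hζ0 : ∀ x, 0 ≤ ζ x)
    (h : ∀ a₁ b₁ a₂ b₂ z x : S, x + a₁ * b₁ + z = a₂ * b₂ + z →
      min (min (μ a₁) (μ a₂)) (min (ν b₁) (ν b₂)) ≤ ζ x) (x : S) :
    hProd μ ν x ≤ ζ x := by
  apply csSup_le ⟨0, Set.mem_insert 0 _⟩
  rintro r hr
  rcases hr with rfl | ⟨a₁, b₁, a₂, b₂, z, hrep, rfl⟩
  · exact hζ0 x
  · exact h a₁ b₁ a₂ b₂ z x hrep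

/-- Key: a prime fuzzy left h-ideal cannot have two values `ζ u < ζ v` with `ζ v < 1`. -/
lemma myAux_key (ζ : S → ℝ) (hζ : IsPrimeFuzzyLeftHIdeal ζ) (u v : S)
    (h1 : ζ u < ζ v) (h2 : ζ v < 1) : False := by
  obtain ⟨⟨hfuz, hadd, hmul, hh⟩, _, hprime⟩ := hζ
  set c := ζ v with hc
  set L : Set S := {x | c ≤ ζ x} with hL
  have hμ : IsFuzzyLeftHIdeal (fun _ : S => c) := myAux_const_fuzzy c (hfuz v)
  have hν : IsFuzzyLeftHIdeal (myInd L) := by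
    refine myAux_indicator_fuzzy L ?_ ?_ ?_
    · intro a ha b hb
      exact le_trans (le_min ha hb) (hadd a b)
    · intro s a ha
      exact le_trans ha (hmul s a)
    · intro x z a b ha hb hz
      exact le_trans (le_min ha hb) (hh a b x z hz)
  have hle : ∀ x, hProd (fun _ : S => c) (myInd L) x ≤ ζ x := by
    refine myAux_hProd_le _ _ _ (fun x => (hfuz x).1) ?_
    intro a₁ b₁ a₂ b₂ z x hrep
    by_cases hb₁ : b₁ ∈ L
    · by_cases hb₂ : b₂ ∈ L
      · have h₁ : c ≤ ζ (a₁ * b₁) := le_trans hb₁ (hmul a₁ b₁)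
        have h₂ : c ≤ ζ (a₂ * b₂) := le_trans hb₂ (hmul a₂ b₂)
        have hx : c ≤ ζ x := le_trans (le_min h₁ h₂) (hh (a₁ * b₁) (a₂ * b₂) x z hrep)
        exact le_trans (min_le_left _ _) (le_trans (min_le_left _ _) hx)
      · refine le_trans (min_le_right _ _) (le_trans (min_le_right _ _) ?_)
        rw [myInd_notMem hb₂]
        exact (hfuz x).1
    · refine le_trans (min_le_right _ _) (le_trans (min_le_left _ _) ?_)
      rw [myInd_notMem hb₁]
      exact (hfuz x).1
  rcases hprime _ _ hμ hν hle with h | h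
  · exact absurd (h u) (not_le.2 h1)
  · have := h v
    have hv : v ∈ L := le_refl c
    rw [myInd_mem hv] at this
    exact absurd (lt_of_lt_of_le h2 this) (lt_irrefl _)

end MyAux

theorem prime_fuzzy_left_h_ideal_structure [NonUnitalSemiring S] (ζ : S → ℝ)
    (hζ : IsPrimeFuzzyLeftHIdeal ζ) :
    (∃ a b : ℝ, a ≠ b ∧ Set.range ζ = {a, b}) ∧ ζ 0 = 1 ∧
      IsPrimeLeftHIdeal {x : S | ζ x = ζ 0} := by
  obtain ⟨hid, ⟨x₀, y₀, hne⟩, hprime⟩ := hζ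
  obtain ⟨hfuz, hadd, hmul, hh⟩ := hid
  have hmax : ∀ x, ζ x ≤ ζ 0 := myAux_le_zero ζ ⟨hfuz, hadd, hmul, hh⟩
  -- a point where ζ is below ζ 0
  obtain ⟨x₁, hx₁⟩ : ∃ x₁, ζ x₁ < ζ 0 := by
    by_cases h : ζ x₀ = ζ 0
    · exact ⟨y₀, lt_of_le_of_ne (hmax y₀) (by rw [← h] at *; exact fun hy => hne (by rw [hy]))⟩
    · exact ⟨x₀, lt_of_le_of_ne (hmax x₀) h⟩
  have hζP : IsPrimeFuzzyLeftHIdeal ζ := ⟨⟨hfuz, hadd, hmul, hh⟩, ⟨x₀, y₀, hne⟩, hprime⟩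
  -- ζ 0 = 1
  have hz1 : ζ 0 = 1 := by
    by_contra h
    exact myAux_key ζ hζP x₁ 0 hx₁ (lt_of_le_of_ne (hfuz 0).2 h)
  have hx₁1 : ζ x₁ < 1 := hz1 ▸ hx₁
  -- every value is 1 or ζ x₁
  have htwo : ∀ y, ζ y = 1 ∨ ζ y = ζ x₁ := by
    intro y
    by_contra h
    push_neg at h
    obtain ⟨h1, h2⟩ := h
    have hy1 : ζ y < 1 := lt_of_le_of_ne (hz1 ▸ hmax y) h1
    rcases lt_trichotomy (ζ y) (ζ x₁) with hlt | heq | hgt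
    · exact myAux_key ζ hζP y x₁ hlt hx₁1
    · exact h2 heq
    · exact myAux_key ζ hζP x₁ y hgt hy1
  refine ⟨⟨1, ζ x₁, ne_of_gt hx₁1, ?_⟩, hz1, ?_, ?_, ?_⟩
  · ext r
    constructor
    · rintro ⟨y, rfl⟩
      rcases htwo y with h | h <;> simp [h]
    · rintro (rfl | rfl)
      · exact ⟨0, hz1⟩
      · exact ⟨x₁, rfl⟩
  -- ζ⁰ is a left h-ideal
  · refine ⟨⟨0, rfl⟩, ?_, ?_, ?_⟩
    · intro a ha b hb
      refine le_antisymm (hmax _) ?_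
      calc ζ 0 = min (ζ a) (ζ b) := by rw [ha, hb, min_self]
        _ ≤ ζ (a + b) := hadd a b
    · intro s a ha
      exact le_antisymm (hmax _) (ha ▸ hmul s a)
    · intro x z a b ha hb hz
      refine le_antisymm (hmax _) ?_
      calc ζ 0 = min (ζ a) (ζ b) := by rw [ha, hb, min_self]
        _ ≤ ζ x := hh a b x z hz
  -- proper
  · intro h
    have : x₁ ∈ {x : S | ζ x = ζ 0} := h ▸ Set.mem_univ x₁
    exact absurd this (ne_of_lt hx₁)
  -- primality
  · intro A B hA hB hAB
    obtain ⟨-, hAadd, hAmul, hAh⟩ := hA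
    obtain ⟨-, hBadd, hBmul, hBh⟩ := hB
    have hμ : IsFuzzyLeftHIdeal (myInd A) :=
      myAux_indicator_fuzzy A hAadd hAmul (fun x z a b ha hb hz => hAh x z a b ha hb hz)
    have hν : IsFuzzyLeftHIdeal (myInd B) :=
      myAux_indicator_fuzzy B hBadd hBmul (fun x z a b ha hb hz => hBh x z a b ha hb hz)
    have hprod : ∀ a ∈ A, ∀ b ∈ B, a * b ∈ setProd A B := by
      intro a ha b hb
      exact ⟨0, fun _ => a, fun _ => b, fun _ => ha, fun _ => hb, by simp⟩
    have hle : ∀ x, hProd (myInd A)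
        (myInd B) x ≤ ζ x := by
      refine myAux_hProd_le _ _ _ (fun x => (hfuz x).1) ?_
      intro a₁ b₁ a₂ b₂ z x hrep
      by_cases ha₁ : a₁ ∈ A
      · by_cases ha₂ : a₂ ∈ A
        · by_cases hb₁ : b₁ ∈ B
          · by_cases hb₂ : b₂ ∈ B
            · have h₁ : ζ (a₁ * b₁) = ζ 0 := hAB (hprod a₁ ha₁ b₁ hb₁)
              have h₂ : ζ (a₂ * b₂) = ζ 0 := hAB (hprod a₂ ha₂ b₂ hb₂)
              have hx : ζ 0 ≤ ζ x := by
                have := hh (a₁ * b₁) (a₂ * b₂) x z hrep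
                rwa [h₁, h₂, min_self] at this
              rw [myInd_mem ha₁, myInd_mem ha₂, myInd_mem hb₁, myInd_mem hb₂]
              rw [hz1] at hx
              simpa using hx
            · refine le_trans (min_le_right _ _) (le_trans (min_le_right _ _) ?_)
              rw [myInd_notMem hb₂]; exact (hfuz x).1
          · refine le_trans (min_le_right _ _) (le_trans (min_le_left _ _) ?_)
            rw [myInd_notMem hb₁]; exact (hfuz x).1
        · refine le_trans (min_le_left _ _) (le_trans (min_le_right _ _) ?_)
          rw [myInd_notMem ha₂]; exact (hfuz x).1
      · refine le_trans (min_le_left _ _) (le_trans (min_le_left _ _) ?_)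
        rw [myInd_notMem ha₁]; exact (hfuz x).1
    rcases hprime _ _ hμ hν hle with h | h
    · left
      intro a ha
      have := h a
      rw [myInd_mem ha] at this
      exact le_antisymm (hmax a) (hz1 ▸ this)
    · right
      intro b hb
      have := h b
      rw [myInd_mem hb] at this
      exact le_antisymm (hmax b) (hz1 ▸ this)
end

section
/- Let ζ be a fuzzy subset of a hemiring S such that ζ(0) = 1, the image of ζ contains exactly two elements, and ζ⁰ = {x ∈ S | ζ(x) = 1} is a prime left h-ideal of S. Then ζ is a prime fuzzy left h-ideal of S. -/
open scoped BigOperators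

variable {S : Type*}

theorem prime_fuzzy_left_h_ideal_of_structure [NonUnitalSemiring S] (ζ : S → ℝ)
    (hfuz : IsFuzzySet ζ) (h0 : ζ 0 = 1)
    (htwo : ∃ a b : ℝ, a ≠ b ∧ Set.range ζ = {a, b})
    (hprime : IsPrimeLeftHIdeal {x : S | ζ x = 1}) :
    IsPrimeFuzzyLeftHIdeal ζ := by
  classical
  obtain ⟨a, b, hab, hr⟩ := htwo
  have hmem : ∀ x, ζ x = a ∨ ζ x = b := by
    intro x
    have : ζ x ∈ ({a, b} : Set ℝ) := by rw [← hr]; exact Set.mem_range_self x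
    simpa using this
  have hrange : ∀ r ∈ ({a, b} : Set ℝ), ∃ x, ζ x = r := by
    intro r hrm
    have : r ∈ Set.range ζ := by rw [hr]; exact hrm
    exact this
  obtain ⟨t, htlt, htval, x₁, hx₁⟩ :
      ∃ t, t < 1 ∧ (∀ x, ζ x = 1 ∨ ζ x = t) ∧ ∃ x, ζ x = t := by
    rcases hmem 0 with h | h
    · have ha : a = 1 := by rw [← h, h0]
      obtain ⟨xb, hxb⟩ := hrange b (by simp)
      have hb1 : b ≤ 1 := hxb ▸ (hfuz xb).2
      have hbne : b ≠ 1 := fun e => hab (ha.trans e.symm)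
      exact ⟨b, lt_of_le_of_ne hb1 hbne,
        fun x => (hmem x).imp (fun e => e.trans ha) id, xb, hxb⟩
    · have hb : b = 1 := by rw [← h, h0]
      obtain ⟨xa, hxa⟩ := hrange a (by simp)
      have ha1 : a ≤ 1 := hxa ▸ (hfuz xa).2
      have hane : a ≠ 1 := fun e => hab (e.trans hb.symm)
      exact ⟨a, lt_of_le_of_ne ha1 hane,
        fun x => (hmem x).elim Or.inr (fun e => Or.inl (e.trans hb)), xa, hxa⟩
  have ht_le : ∀ x, t ≤ ζ x := by
    intro x
    rcases htval x with h | h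
    · rw [h]; exact htlt.le
    · rw [h]
  obtain ⟨⟨Pne, Padd, Pmul, Ph⟩, PneU, Pprime⟩ := hprime
  have hζideal : IsFuzzyLeftHIdeal ζ := by
    refine ⟨hfuz, ?_, ?_, ?_⟩
    · intro x y
      rcases htval x with hx | hx
      · rcases htval y with hy | hy
        · have : x + y ∈ {x : S | ζ x = 1} := Padd x hx y hy
          rw [hx, hy, this]; simp
        · calc min (ζ x) (ζ y) ≤ ζ y := min_le_right _ _
            _ = t := hy
            _ ≤ ζ (x + y) := ht_le _
      · calc min (ζ x) (ζ y) ≤ ζ x := min_le_left _ _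
          _ = t := hx
          _ ≤ ζ (x + y) := ht_le _
    · intro x y
      rcases htval y with hy | hy
      · have : x * y ∈ {x : S | ζ x = 1} := Pmul x y hy
        rw [hy, this]
      · rw [hy]; exact ht_le _
    · intro c d x z hxz
      rcases htval c with hc | hc
      · rcases htval d with hd | hd
        · have : x ∈ {x : S | ζ x = 1} := Ph x z c d hc hd hxz
          rw [hc, hd, this]; simp
        · calc min (ζ c) (ζ d) ≤ ζ d := min_le_right _ _
            _ = t := hd
            _ ≤ ζ x := ht_le _
      · calc min (ζ c) (ζ d) ≤ ζ c := min_le_left _ _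
          _ = t := hc
          _ ≤ ζ x := ht_le _
  refine ⟨hζideal, ⟨x₁, 0, ?_⟩, ?_⟩
  · rw [hx₁, h0]; exact htlt.ne
  intro μ ν hμ hν hle
  by_contra hcon
  push_neg at hcon
  obtain ⟨⟨x₀, hx₀⟩, ⟨y₀, hy₀⟩⟩ := hcon
  -- μ 0 and ν 0 dominate all values
  have hμ0 : ∀ x, μ x ≤ μ 0 := by
    intro x
    have := hμ.2.2.2 x x 0 0 (by rw [zero_add, add_zero])
    simpa using this
  have hν0 : ∀ x, ν x ≤ ν 0 := by
    intro x
    have := hν.2.2.2 x x 0 0 (by rw [zero_add, add_zero])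
    simpa using this
  set s : ℝ := min (μ x₀) (ν y₀) with hs
  have hx₀t : t < μ x₀ := lt_of_le_of_lt (ht_le x₀) hx₀
  have hy₀t : t < ν y₀ := lt_of_le_of_lt (ht_le y₀) hy₀
  have hts : t < s := lt_min hx₀t hy₀t
  set A : Set S := {x | s ≤ μ x} with hA
  set B : Set S := {x | s ≤ ν x} with hB
  have hAideal : IsLeftHIdeal A := by
    refine ⟨⟨x₀, show s ≤ μ x₀ from min_le_left _ _⟩, ?_, ?_, ?_⟩
    · intro u hu v hv
      exact le_trans (le_min hu hv) (hμ.2.1 u v)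
    · intro c u hu
      exact le_trans hu (hμ.2.2.1 c u)
    · intro x z c d hc hd hxz
      exact le_trans (le_min hc hd) (hμ.2.2.2 c d x z hxz)
  have hBideal : IsLeftHIdeal B := by
    refine ⟨⟨y₀, show s ≤ ν y₀ from min_le_right _ _⟩, ?_, ?_, ?_⟩
    · intro u hu v hv
      exact le_trans (le_min hu hv) (hν.2.1 u v)
    · intro c u hu
      exact le_trans hu (hν.2.2.1 c u)
    · intro x z c d hc hd hxz
      exact le_trans (le_min hc hd) (hν.2.2.2 c d x z hxz)
  have hbdd : ∀ u v : S → ℝ, IsFuzzySet u → IsFuzzySet v → ∀ x : S,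
      BddAbove (insert 0 {r | ∃ a₁ b₁ a₂ b₂ z : S, x + a₁ * b₁ + z = a₂ * b₂ + z ∧
        r = min (min (u a₁) (u a₂)) (min (v b₁) (v b₂))}) := by
    intro u v hu hv x
    refine ⟨1, ?_⟩
    rintro r (rfl | ⟨a₁, b₁, a₂, b₂, z, _, rfl⟩)
    · norm_num
    · exact le_trans (min_le_left _ _) (le_trans (min_le_left _ _) (hu a₁).2)
  have hABP : setProd A B ⊆ {x : S | ζ x = 1} := by
    rintro x ⟨n, f, g, hf, hg, rfl⟩
    have hterm : ∀ i : Fin (n + 1), ζ (f i * g i) = 1 := by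
      intro i
      have hrep : f i * g i + (0 : S) * 0 + 0 = f i * g i + 0 ∧
          (min (min (μ 0) (μ (f i))) (min (ν 0) (ν (g i))) =
           min (min (μ 0) (μ (f i))) (min (ν 0) (ν (g i)))) := ⟨by simp, rfl⟩
      have hmemset : min (min (μ 0) (μ (f i))) (min (ν 0) (ν (g i))) ∈
          insert (0:ℝ) {r | ∃ a₁ b₁ a₂ b₂ z : S,
            f i * g i + a₁ * b₁ + z = a₂ * b₂ + z ∧
            r = min (min (μ a₁) (μ a₂)) (min (ν b₁) (ν b₂))} := by
        refine Set.mem_insert_of_mem _ ⟨0, 0, f i, g i, 0, by simp, rfl⟩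
      have hle1 : min (min (μ 0) (μ (f i))) (min (ν 0) (ν (g i))) ≤
          hProd μ ν (f i * g i) :=
        le_csSup (hbdd μ ν hμ.1 hν.1 _) hmemset
      have hslb : s ≤ min (min (μ 0) (μ (f i))) (min (ν 0) (ν (g i))) :=
        le_min (le_min (le_trans (min_le_left _ _) (hμ0 x₀)) (hf i))
          (le_min (le_trans (min_le_right _ _) (hν0 y₀)) (hg i))
      have : t < ζ (f i * g i) :=
        lt_of_lt_of_le hts (le_trans hslb (le_trans hle1 (hle _)))
      rcases htval (f i * g i) with h | h
      · exact h
      · exact absurd h (by intro e; rw [e] at this; exact lt_irrefl _ this)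
    have hsum : ∀ m (u : Fin m → S), (∀ i, ζ (u i) = 1) → ζ (∑ i, u i) = 1 := by
      intro m
      induction m with
      | zero => intro u _; simpa using h0
      | succ k ih =>
        intro u hu
        rw [Fin.sum_univ_succ]
        exact Padd _ (hu 0) _ (ih _ fun i => hu i.succ)
    exact hsum _ _ hterm
  rcases Pprime A B hAideal hBideal hABP with hAP | hBP
  · have : ζ x₀ = 1 := hAP (show s ≤ μ x₀ from min_le_left _ _)
    have hμ1 : μ x₀ ≤ 1 := (hμ.1 x₀).2
    rw [this] at hx₀
    exact absurd hμ1 (not_le_of_gt hx₀)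
  · have : ζ y₀ = 1 := hBP (show s ≤ ν y₀ from min_le_right _ _)
    have hν1 : ν y₀ ≤ 1 := (hν.1 y₀).2
    rw [this] at hy₀
    exact absurd hν1 (not_le_of_gt hy₀)
end

section
/- The fuzzy subset μ on the hemiring of non-negative integers defined by μ(n) = 1 if n is even and μ(n) = 0.2 otherwise is a prime fuzzy left h-ideal. -/
open scoped BigOperators

variable {S : Type*}

theorem even_indicator_prime_fuzzy :
    IsPrimeFuzzyLeftHIdeal (fun n : ℕ => if Even n then (1:ℝ) else 0.2) := by
  classical
  set ζ : ℕ → ℝ := fun n => if Even n then (1:ℝ) else 0.2 with hζ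
  have hle : ∀ n, (0.2:ℝ) ≤ ζ n := by
    intro n; simp only [ζ]; split <;> norm_num
  have hle1 : ∀ n, ζ n ≤ 1 := by
    intro n; simp only [ζ]; split <;> norm_num
  have hodd : ∀ n, ¬ Even n → ζ n = 0.2 := by
    intro n hn; simp [ζ, hn]
  have hideal : IsFuzzyLeftHIdeal ζ := by
    refine ⟨fun x => ⟨by linarith [hle x], hle1 x⟩, ?_, ?_, ?_⟩
    · intro x y
      by_cases h : Even (x + y)
      · calc min (ζ x) (ζ y) ≤ ζ x := min_le_left _ _
          _ ≤ 1 := hle1 x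
          _ = ζ (x + y) := by simp [ζ, h]
      · rw [Nat.even_add] at h
        by_cases hx : Even x
        · have hy : ¬ Even y := fun hy => h ⟨fun _ => hy, fun _ => hx⟩
          calc min (ζ x) (ζ y) ≤ ζ y := min_le_right _ _
            _ = 0.2 := hodd y hy
            _ ≤ ζ (x + y) := hle _
        · calc min (ζ x) (ζ y) ≤ ζ x := min_le_left _ _
            _ = 0.2 := hodd x hx
            _ ≤ ζ (x + y) := hle _
    · intro x y
      by_cases hy : Even y
      · have : Even (x * y) := hy.mul_left x
        calc ζ y ≤ 1 := hle1 y
          _ = ζ (x * y) := by simp [ζ, this]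
      · rw [hodd y hy]; exact hle _
    · intro a b x z hxz
      have hab : x + a = b := Nat.add_right_cancel hxz
      by_cases hx : Even x
      · calc min (ζ a) (ζ b) ≤ ζ a := min_le_left _ _
          _ ≤ 1 := hle1 a
          _ = ζ x := by simp [ζ, hx]
      · by_cases ha : Even a
        · have hb : ¬ Even b := by
            rw [← hab, Nat.even_add]
            intro hiff
            exact hx (hiff.mpr ha)
          calc min (ζ a) (ζ b) ≤ ζ b := min_le_right _ _
            _ = 0.2 := hodd b hb
            _ ≤ ζ x := hle _
        · calc min (ζ a) (ζ b) ≤ ζ a := min_le_left _ _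
            _ = 0.2 := hodd a ha
            _ ≤ ζ x := hle _
  refine ⟨hideal, ⟨0, 1, by norm_num [ζ]⟩, ?_⟩
  intro μ ν hμ hν hsub
  by_contra hcon
  push_neg at hcon
  obtain ⟨⟨x, hx⟩, ⟨y, hy⟩⟩ := hcon
  -- μ x > ζ x forces x odd and μ x > 0.2
  have hxodd : ¬ Even x := by
    intro h
    have h1 : ζ x = 1 := by simp [ζ, h]
    have := (hμ.1 x).2
    rw [h1] at hx; linarith
  have hyodd : ¬ Even y := by
    intro h
    have h1 : ζ y = 1 := by simp [ζ, h]
    have := (hν.1 y).2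
    rw [h1] at hy; linarith
  have hμx : 0.2 < μ x := by rw [hodd x hxodd] at hx; exact hx
  have hνy : 0.2 < ν y := by rw [hodd y hyodd] at hy; exact hy
  have hμ0 : μ x ≤ μ 0 := by
    have := hμ.2.2.1 0 x
    simpa using this
  have hν0 : ν y ≤ ν 0 := by
    have := hν.2.2.1 0 y
    simpa using this
  -- the representation x*y + 0*0 + 0 = x*y + 0 gives a member of the hProd set
  have hmem : min (min (μ 0) (μ x)) (min (ν 0) (ν y)) ∈
      insert (0:ℝ) {r | ∃ a₁ b₁ a₂ b₂ z : ℕ, x * y + a₁ * b₁ + z = a₂ * b₂ + z ∧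
        r = min (min (μ a₁) (μ a₂)) (min (ν b₁) (ν b₂))} := by
    exact Set.mem_insert_iff.mpr (Or.inr ⟨0, 0, x, y, 0, by simp, rfl⟩)
  have hbdd : BddAbove (insert (0:ℝ) {r | ∃ a₁ b₁ a₂ b₂ z : ℕ,
      x * y + a₁ * b₁ + z = a₂ * b₂ + z ∧
      r = min (min (μ a₁) (μ a₂)) (min (ν b₁) (ν b₂))}) := by
    refine ⟨1, ?_⟩
    rintro r (rfl | ⟨a₁, b₁, a₂, b₂, z, _, rfl⟩)
    · norm_num
    · calc min (min (μ a₁) (μ a₂)) (min (ν b₁) (ν b₂)) ≤ min (μ a₁) (μ a₂) :=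
          min_le_left _ _
        _ ≤ μ a₁ := min_le_left _ _
        _ ≤ 1 := (hμ.1 a₁).2
  have hge : min (min (μ 0) (μ x)) (min (ν 0) (ν y)) ≤ hProd μ ν (x * y) :=
    le_csSup hbdd hmem
  have hxy : ¬ Even (x * y) := by
    rw [Nat.even_mul]; rintro (h | h); exacts [hxodd h, hyodd h]
  have hsup := hsub (x * y)
  rw [hodd _ hxy] at hsup
  have h1 : (0.2:ℝ) < min (min (μ 0) (μ x)) (min (ν 0) (ν y)) := by
    apply lt_min <;> apply lt_min
    · exact lt_of_lt_of_le hμx hμ0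
    · exact hμx
    · exact lt_of_lt_of_le hνy hν0
    · exact hνy
  linarith
end

section
/- Given a fuzzy left h-ideal μ of a hemiring S, the fuzzy set μ⁺ defined by μ⁺(x) = μ(x) + 1 − μ(0) is a normal fuzzy left h-ideal of S containing μ, and (μ⁺)⁺ = μ⁺. -/
open scoped BigOperators

variable {S : Type*}

theorem plus_normal_fuzzy_left_h_ideal [NonUnitalSemiring S] (μ : S → ℝ)
    (hμ : IsFuzzyLeftHIdeal μ) :
    IsFuzzyLeftHIdeal (fun x => μ x + 1 - μ 0) ∧
      (μ 0 + 1 - μ 0 = 1) ∧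
      (∀ x, μ x ≤ μ x + 1 - μ 0) ∧
      (fun x => (μ x + 1 - μ 0) + 1 - (μ 0 + 1 - μ 0)) = (fun x => μ x + 1 - μ 0) := by
  obtain ⟨hset, hadd, hmul, hh⟩ := hμ
  have h0 : ∀ x : S, μ x ≤ μ 0 := by
    intro x
    have := hh x x 0 x (by simp [zero_add])
    simpa using this
  refine ⟨⟨?_, ?_, ?_, ?_⟩, by ring, ?_, ?_⟩
  · intro x
    dsimp only
    constructor
    · have := (hset x).1; have := (hset 0).2; linarith
    · have := h0 x; linarith
  · intro x y
    dsimp only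
    have := hadd x y
    simp only [min_def] at *
    split_ifs at * <;> linarith
  · intro x y
    dsimp only
    have := hmul x y; linarith
  · intro a b x z hxz
    have := hh a b x z hxz
    simp only [min_def] at *
    split_ifs at * <;> linarith
  · intro x
    have := (hset 0).2; linarith
  · funext x; ring
end

section
/- Let μ be a fuzzy left h-ideal of a hemiring S and f : [0, μ(0)] → [0,1] an increasing (monotone) function. Then μ_f defined by μ_f(x) = f(μ(x)) is a fuzzy left h-ideal of S; moreover if f(t) ≥ t for all t ∈ [0, μ(0)], then μ ⊆ μ_f. -/
open scoped BigOperators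

variable {S : Type*}

theorem comp_increasing_fuzzy_left_h_ideal [NonUnitalSemiring S] (μ : S → ℝ)
    (hμ : IsFuzzyLeftHIdeal μ) (f : ℝ → ℝ)
    (hmono : ∀ s t : ℝ, 0 ≤ s → s ≤ t → t ≤ μ 0 → f s ≤ f t)
    (hrange : ∀ t ∈ Set.Icc (0:ℝ) (μ 0), f t ∈ Set.Icc (0:ℝ) 1) :
    IsFuzzyLeftHIdeal (fun x => f (μ x)) ∧
      ((∀ t ∈ Set.Icc (0:ℝ) (μ 0), t ≤ f t) → ∀ x, μ x ≤ f (μ x)) := by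
  obtain ⟨hset, hadd, hmul, hh⟩ := hμ
  have hub : ∀ x : S, μ x ≤ μ 0 := by
    intro x
    have := hmul 0 x
    simpa using this
  have hmem : ∀ x : S, μ x ∈ Set.Icc (0:ℝ) (μ 0) :=
    fun x => ⟨(hset x).1, hub x⟩
  have step : ∀ (a b c : S), min (μ a) (μ b) ≤ μ c →
      min (f (μ a)) (f (μ b)) ≤ f (μ c) := by
    intro a b c h
    have hfmin : f (min (μ a) (μ b)) ≤ f (μ c) :=
      hmono _ _ (le_min (hset a).1 (hset b).1) h (hub c)
    rcases min_cases (μ a) (μ b) with ⟨heq, _⟩ | ⟨heq, _⟩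
    · exact le_trans (min_le_left _ _) (heq ▸ hfmin)
    · exact le_trans (min_le_right _ _) (heq ▸ hfmin)
  refine ⟨⟨fun x => hrange _ (hmem x), fun x y => step x y (x + y) (hadd x y),
    fun x y => hmono _ _ (hset y).1 (hmul x y) (hub (x * y)),
    fun a b x z hz => step a b x (hh a b x z hz)⟩, fun hge x => hge _ (hmem x)⟩
end
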